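/- Graham's online list scheduling of a DAG of tasks on m identical processors: at every moment when a processor is idle and some task has all its predecessors completed, a task is started; then the makespan is at most (2 - 1/m) times the optimal makespan. -/

import Mathlib

/-- A schedule of tasks on `m` identical processors: each task gets a start
time and a processor. -/
structure Sched (T : Type*) (m : ℕ) where
  start : T → ℝ
  proc : T → Fin m

/-- The schedule is feasible for the precedence DAG `E` and processing times
`p`: tasks start at nonnegative times, no task starts before all its
predecessors finish, and each processor runs at most one task at a time. -/
def Feasible {T : Type*} {m : ℕ} (E : T → T → Prop) (p : T → ℝ)
    (S : Sched T m) : Prop :=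
  (∀ t, 0 ≤ S.start t) ∧
  (∀ a b, E a b → S.start a + p a ≤ S.start b) ∧
  (∀ a b, a ≠ b → S.proc a = S.proc b →
    S.start a + p a ≤ S.start b ∨ S.start b + p b ≤ S.start a)

/-- Processor `j` is busy at time `x`. -/
def Busy {T : Type*} {m : ℕ} (p : T → ℝ) (S : Sched T m) (j : Fin m) (x : ℝ) : Prop :=
  ∃ t, S.proc t = j ∧ S.start t ≤ x ∧ x < S.start t + p t

/-- Task `t` is available at time `x`: it has not yet been started, and all of
its predecessors have finished. -/
def Avail {T : Type*} {m : ℕ} (E : T → T → Prop) (p : T → ℝ)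
    (S : Sched T m) (t : T) (x : ℝ) : Prop :=
  x < S.start t ∧ ∀ a, E a t → S.start a + p a ≤ x

/-- `S` is a list schedule: at every moment at which some task is available,
every processor is busy (i.e. whenever a processor is idle and a task is
available, some task is immediately started). -/
def IsListSched {T : Type*} {m : ℕ} (E : T → T → Prop) (p : T → ℝ)
    (S : Sched T m) : Prop :=
  ∀ x : ℝ, 0 ≤ x → (∃ t, Avail E p S t x) → ∀ j : Fin m, Busy p S j x

/-- The makespan of a schedule: the maximum completion time. -/
noncomputable def makespan {T : Type*} [Fintype T] [Nonempty T] {m : ℕ}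
    (p : T → ℝ) (S : Sched T m) : ℝ :=
  ⨆ t, (S.start t + p t)

open MeasureTheory Finset

lemma finish_le_makespan {T : Type*} [Fintype T] [Nonempty T] {m : ℕ}
    (p : T → ℝ) (S : Sched T m) (t : T) :
    S.start t + p t ≤ makespan p S :=
  le_ciSup (Set.Finite.bddAbove (Set.finite_range (fun t => S.start t + p t))) t

lemma load_le_makespan {T : Type*} [Fintype T] [Nonempty T] {m : ℕ}
    (E : T → T → Prop) (p : T → ℝ) (hp : ∀ t, 0 < p t)
    (S' : Sched T m) (hS' : Feasible E p S') (j : Fin m) :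
    ∑ t ∈ Finset.univ.filter (fun t => S'.proc t = j), p t ≤ makespan p S' := by
  classical
  obtain ⟨h0, hE, hproc⟩ := hS'
  set F := Finset.univ.filter (fun t => S'.proc t = j) with hF
  have hmk0 : 0 ≤ makespan p S' := by
    obtain ⟨t0⟩ := ‹Nonempty T›
    have h1 := finish_le_makespan p S' t0
    have h2 := h0 t0; have h3 := (hp t0).le; linarith
  have hdisj : (↑F : Set T).PairwiseDisjoint
      (fun t => Set.Ico (S'.start t) (S'.start t + p t)) := by
    intro a ha b hb hab
    simp only [hF, Finset.coe_filter, Set.mem_setOf_eq, Finset.mem_univ, true_and] at ha hb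
    have hpa : S'.proc a = S'.proc b := by rw [ha, hb]
    simp only [Function.onFun]
    rw [Set.Ico_disjoint_Ico]
    rcases hproc a b hab hpa with h | h
    · exact inf_le_left.trans (h.trans le_sup_right)
    · exact inf_le_right.trans (h.trans le_sup_left)
  have hsub : (⋃ t ∈ F, Set.Ico (S'.start t) (S'.start t + p t)) ⊆
      Set.Ico 0 (makespan p S') := by
    intro x hx
    simp only [Set.mem_iUnion, Set.mem_Ico] at hx
    obtain ⟨t, _, hx1, hx2⟩ := hx
    exact ⟨le_trans (h0 t) hx1, lt_of_lt_of_le hx2 (finish_le_makespan p S' t)⟩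
  have hmeas := measure_biUnion_finset (μ := volume) hdisj
    (fun b _ => (measurableSet_Ico : MeasurableSet (Set.Ico (S'.start b) (S'.start b + p b))))
  rw [← ENNReal.ofReal_le_ofReal_iff hmk0]
  calc ENNReal.ofReal (∑ t ∈ F, p t) = ∑ t ∈ F, ENNReal.ofReal (p t) :=
        ENNReal.ofReal_sum_of_nonneg (fun t _ => (hp t).le)
    _ = ∑ t ∈ F, volume (Set.Ico (S'.start t) (S'.start t + p t)) := by
        simp [Real.volume_Ico]
    _ = volume (⋃ t ∈ F, Set.Ico (S'.start t) (S'.start t + p t)) := hmeas.symm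
    _ ≤ volume (Set.Ico 0 (makespan p S')) := measure_mono hsub
    _ = ENNReal.ofReal (makespan p S') := by simp [Real.volume_Ico]

lemma chain_sum_le {T : Type*} {m : ℕ} (E : T → T → Prop) (p : T → ℝ)
    (hp : ∀ t, 0 < p t) (S' : Sched T m) (hS' : Feasible E p S') :
    ∀ L : List T, L.Chain' (fun a b => E b a) → ∀ u, L.head? = some u →
      (L.map p).sum ≤ S'.start u + p u := by
  intro L
  induction L with
  | nil => intro _ u h; simp at h
  | cons a L ih =>
    intro hch u hu
    simp only [List.head?_cons, Option.some.injEq] at hu; subst hu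
    simp only [List.Chain'] at hch; rw [List.isChain_cons] at hch
    cases L with
    | nil => simp only [List.map_cons, List.map_nil, List.sum_cons, List.sum_nil, add_zero]
             linarith [hS'.1 a]
    | cons b L' =>
      have hE : E b a := hch.1 b rfl
      have h1 := ih hch.2 b rfl
      have h2 := hS'.2.1 b a hE
      simp only [List.map_cons, List.sum_cons] at h1 ⊢
      linarith

lemma chain_exists {T : Type*} [Fintype T] {m : ℕ} (E : T → T → Prop) (p : T → ℝ)
    (hp : ∀ t, 0 < p t) (S : Sched T m) (hS : Feasible E p S)
    (hlist : IsListSched E p S) (u : T) :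
    ∃ L : List T, L.Chain' (fun a b => E b a) ∧ L.head? = some u ∧
      ∀ x, 0 ≤ x → x < S.start u + p u → (¬ ∀ j, Busy p S j x) →
        ∃ k ∈ L, S.start k ≤ x ∧ x < S.start k + p k := by
  classical
  obtain ⟨h0, hE, -⟩ := hS
  suffices H : ∀ n : ℕ, ∀ u : T,
      (Finset.univ.filter fun v => S.start v < S.start u).card ≤ n →
      ∃ L : List T, L.Chain' (fun a b => E b a) ∧ L.head? = some u ∧
        ∀ x, 0 ≤ x → x < S.start u + p u → (¬ ∀ j, Busy p S j x) →
          ∃ k ∈ L, S.start k ≤ x ∧ x < S.start k + p k by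
    exact H _ u le_rfl
  intro n
  induction n with
  | zero =>
    intro u hcard
    by_cases hpred : ∃ a, E a u
    · obtain ⟨a, haE⟩ := hpred
      have hlt : S.start a < S.start u :=
        lt_of_lt_of_le (lt_add_of_pos_right _ (hp a)) (hE a u haE)
      have : a ∈ Finset.univ.filter fun v => S.start v < S.start u := by
        simp [hlt]
      have := Finset.card_pos.mpr ⟨a, this⟩
      omega
    · push_neg at hpred
      refine ⟨[u], List.isChain_singleton u, rfl, ?_⟩
      intro x hx0 hxlt hidle
      by_cases hxu : S.start u ≤ x
      · exact ⟨u, by simp, hxu, hxlt⟩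
      · push_neg at hxu
        exact absurd (hlist x hx0 ⟨u, hxu, fun a ha => absurd ha (hpred a)⟩) hidle
  | succ n ih =>
    intro u hcard
    by_cases hpred : ∃ a, E a u
    · obtain ⟨a0, ha0⟩ := hpred
      obtain ⟨a, haA, hamax⟩ := Finset.exists_max_image
        (Finset.univ.filter fun a => E a u) (fun a => S.start a + p a)
        ⟨a0, by simp [ha0]⟩
      have haE : E a u := by simpa using haA
      have hlt : S.start a < S.start u :=
        lt_of_lt_of_le (lt_add_of_pos_right _ (hp a)) (hE a u haE)
      have hsub : (Finset.univ.filter fun v => S.start v < S.start a) ⊂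
          (Finset.univ.filter fun v => S.start v < S.start u) := by
        constructor
        · intro v hv
          simp only [Finset.mem_filter, Finset.mem_univ, true_and] at hv ⊢
          linarith
        · intro hcontra
          have h1 : a ∈ Finset.univ.filter fun v => S.start v < S.start u := by simp [hlt]
          have := hcontra h1
          simp only [Finset.mem_filter, Finset.mem_univ, true_and] at this
          exact lt_irrefl _ this
      have hcard' : (Finset.univ.filter fun v => S.start v < S.start a).card ≤ n := by
        have := Finset.card_lt_card hsub
        omega
      obtain ⟨L, hch, hhd, hcov⟩ := ih a hcard'
      refine ⟨u :: L, ?_, rfl, ?_⟩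
      · simp only [List.Chain']; rw [List.isChain_cons]
        refine ⟨fun y hy => ?_, hch⟩
        rw [hhd] at hy
        simp only [Option.mem_def, Option.some.injEq] at hy
        subst hy; exact haE
      · intro x hx0 hxlt hidle
        by_cases hxu : S.start u ≤ x
        · exact ⟨u, List.mem_cons_self, hxu, hxlt⟩
        · push_neg at hxu
          have hnav : ¬ Avail E p S u x := fun hav => hidle (hlist x hx0 ⟨u, hav⟩)
          rw [Avail] at hnav; push_neg at hnav
          obtain ⟨b, hbE, hbx⟩ := hnav hxu
          have hxa : x < S.start a + p a :=
            lt_of_lt_of_le hbx (hamax b (by simp [hbE]))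
          obtain ⟨k, hk, h1, h2⟩ := hcov x hx0 hxa hidle
          exact ⟨k, List.mem_cons_of_mem _ hk, h1, h2⟩
    · push_neg at hpred
      refine ⟨[u], List.isChain_singleton u, rfl, ?_⟩
      intro x hx0 hxlt hidle
      by_cases hxu : S.start u ≤ x
      · exact ⟨u, by simp, hxu, hxlt⟩
      · push_neg at hxu
        exact absurd (hlist x hx0 ⟨u, hxu, fun a ha => absurd ha (hpred a)⟩) hidle

open scoped ENNReal in
/-- Graham's bound for online list scheduling of a DAG on `m` identical
processors: the makespan of any list schedule is at most `(2 - 1/m)` times the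
makespan of any feasible schedule, hence at most `(2 - 1/m)` times the optimal
makespan. -/
theorem graham_list_scheduling {T : Type*} [Fintype T] [Nonempty T] {m : ℕ}
    (hm : 0 < m) (E : T → T → Prop) (p : T → ℝ) (hp : ∀ t, 0 < p t)
    (S : Sched T m) (hS : Feasible E p S) (hlist : IsListSched E p S)
    (S' : Sched T m) (hS' : Feasible E p S') :
    makespan p S ≤ (2 - 1 / (m : ℝ)) * makespan p S' := by
  classical
  obtain ⟨t1, -, ht1⟩ := Finset.exists_max_image Finset.univ
    (fun t => S.start t + p t) Finset.univ_nonempty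
  have hM : makespan p S = S.start t1 + p t1 :=
    le_antisymm (ciSup_le fun t => ht1 t (Finset.mem_univ t)) (finish_le_makespan p S t1)
  set M := S.start t1 + p t1 with hMdef
  set OPT := makespan p S' with hOPTdef
  have hM0 : 0 ≤ M := by have := hS.1 t1; have := (hp t1).le; linarith [hMdef]
  have hOPT0 : 0 ≤ OPT := by
    have h1 := finish_le_makespan p S' t1
    have h2 := hS'.1 t1; have h3 := (hp t1).le; linarith
  obtain ⟨L, hch, hhd, hcov⟩ := chain_exists E p hp S hS hlist t1
  have hpair : L.Pairwise (fun a b => S.start b < S.start a) := by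
    haveI : IsTrans T (fun a b => S.start b < S.start a) := ⟨fun a b c h1 h2 => h2.trans h1⟩
    exact List.isChain_iff_pairwise.mp (hch.imp (fun {a b} h =>
      lt_of_lt_of_le (lt_add_of_pos_right _ (hp b)) (hS.2.1 b a h)))
  have hnodup : L.Nodup := hpair.imp (fun {a b} h => by rintro rfl; exact lt_irrefl _ h)
  set C := (L.map p).sum with hCdef
  have hC0 : 0 ≤ C := List.sum_nonneg (by
    intro x hx; obtain ⟨t, -, rfl⟩ := List.mem_map.mp hx; exact (hp t).le)
  have hCOPT : C ≤ OPT :=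
    le_trans (chain_sum_le E p hp S' hS' L hch t1 hhd) (finish_le_makespan p S' t1)
  set P := ∑ t : T, p t with hPdef
  have hP0 : 0 ≤ P := Finset.sum_nonneg fun t _ => (hp t).le
  have hPle : P ≤ m * OPT := by
    calc P = ∑ j : Fin m, ∑ t ∈ Finset.univ.filter (fun t => S'.proc t = j), p t :=
        (Finset.sum_fiberwise _ _ _).symm
      _ ≤ ∑ _j : Fin m, OPT :=
        Finset.sum_le_sum fun j _ => load_le_makespan E p hp S' hS' j
      _ = m * OPT := by
        simp [Finset.sum_const, Finset.card_univ, nsmul_eq_mul]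
  set B : Fin m → Set ℝ := fun j =>
    ⋃ t ∈ Finset.univ.filter (fun t => S.proc t = j),
      Set.Ico (S.start t) (S.start t + p t) with hBdef
  have hBmeas : ∀ j, MeasurableSet (B j) :=
    fun j => Finset.measurableSet_biUnion _ fun t _ => measurableSet_Ico
  have hBbusy : ∀ j x, Busy p S j x → x ∈ B j := by
    rintro j x ⟨t, h1, h2, h3⟩
    simp only [hBdef, Set.mem_iUnion, Finset.mem_filter, Finset.mem_univ, true_and,
      Set.mem_Ico]
    exact ⟨t, h1, h2, h3⟩
  have hBvol : ∀ j, volume (B j) ≤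
      ∑ t ∈ Finset.univ.filter (fun t => S.proc t = j), ENNReal.ofReal (p t) := by
    intro j
    refine le_trans (measure_biUnion_finset_le _ _) ?_
    exact Finset.sum_le_sum fun t _ => by simp [Real.volume_Ico]
  have hidle_sub : ∀ j, Set.Ico (0:ℝ) M \ B j ⊆
      ⋃ k ∈ L.toFinset, Set.Ico (S.start k) (S.start k + p k) := by
    intro j x hx
    obtain ⟨⟨hx0, hxM⟩, hxB⟩ := hx
    have hnb : ¬ ∀ j', Busy p S j' x := fun h => hxB (hBbusy j x (h j))
    obtain ⟨k, hk, h1, h2⟩ := hcov x hx0 hxM hnb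
    simp only [Set.mem_iUnion, List.mem_toFinset, Set.mem_Ico]
    exact ⟨k, hk, h1, h2⟩
  have hidle : ∀ j, volume (Set.Ico (0:ℝ) M \ B j) ≤
      ∑ k ∈ L.toFinset,
        volume ((Set.Ico (0:ℝ) M \ B j) ∩ Set.Ico (S.start k) (S.start k + p k)) := by
    intro j
    have heq : Set.Ico (0:ℝ) M \ B j =
        ⋃ k ∈ L.toFinset,
          (Set.Ico (0:ℝ) M \ B j) ∩ Set.Ico (S.start k) (S.start k + p k) := by
      rw [← Set.inter_iUnion₂]
      exact (Set.inter_eq_left.mpr (hidle_sub j)).symm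
    conv_lhs => rw [heq]
    exact measure_biUnion_finset_le (μ := (volume : MeasureTheory.Measure ℝ)) _ _
  have hperk : ∀ k ∈ L.toFinset, (∑ j : Fin m,
      volume ((Set.Ico (0:ℝ) M \ B j) ∩ Set.Ico (S.start k) (S.start k + p k))) ≤
      (m - 1) • ENNReal.ofReal (p k) := by
    intro k _
    have hzero : volume ((Set.Ico (0:ℝ) M \ B (S.proc k)) ∩
        Set.Ico (S.start k) (S.start k + p k)) = 0 := by
      have hemp : (Set.Ico (0:ℝ) M \ B (S.proc k)) ∩
          Set.Ico (S.start k) (S.start k + p k) = ∅ := by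
        ext x
        simp only [Set.mem_inter_iff, Set.mem_diff, Set.mem_Ico,
          Set.mem_empty_iff_false, iff_false, not_and]
        rintro ⟨-, hxB⟩ hx1 hx2
        exact absurd (hBbusy _ x ⟨k, rfl, hx1, hx2⟩) hxB
      rw [hemp, measure_empty]
    have hle : ∀ j : Fin m, volume ((Set.Ico (0:ℝ) M \ B j) ∩
        Set.Ico (S.start k) (S.start k + p k)) ≤ ENNReal.ofReal (p k) := by
      intro j
      refine le_trans (measure_mono Set.inter_subset_right) ?_
      simp [Real.volume_Ico]
    rw [← Finset.sum_erase_add _ _ (Finset.mem_univ (S.proc k)), hzero, add_zero]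
    refine le_trans (Finset.sum_le_card_nsmul _ _ _ (fun j _ => hle j)) ?_
    rw [Finset.card_erase_of_mem (Finset.mem_univ _), Finset.card_univ, Fintype.card_fin]
  have hsumC : ∑ k ∈ L.toFinset, ENNReal.ofReal (p k) = ENNReal.ofReal C := by
    rw [← ENNReal.ofReal_sum_of_nonneg (fun k _ => (hp k).le), hCdef,
      ← List.sum_toFinset p hnodup]
  have hm1 : (1:ℝ) ≤ m := Nat.one_le_cast.mpr hm
  have hEN : (↑m : ℝ≥0∞) * ENNReal.ofReal M ≤
      ENNReal.ofReal P + ((m-1 : ℕ) : ℝ≥0∞) * ENNReal.ofReal C := by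
    calc (↑m : ℝ≥0∞) * ENNReal.ofReal M = ∑ _j : Fin m, volume (Set.Ico (0:ℝ) M) := by
          simp [Real.volume_Ico, Finset.sum_const, Finset.card_univ, nsmul_eq_mul]
      _ = ∑ j : Fin m, (volume (Set.Ico (0:ℝ) M ∩ B j)
            + volume (Set.Ico (0:ℝ) M \ B j)) :=
          Finset.sum_congr rfl fun j _ => (measure_inter_add_diff _ (hBmeas j)).symm
      _ = (∑ j : Fin m, volume (Set.Ico (0:ℝ) M ∩ B j))
            + ∑ j : Fin m, volume (Set.Ico (0:ℝ) M \ B j) := Finset.sum_add_distrib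
      _ ≤ (∑ j : Fin m, ∑ t ∈ Finset.univ.filter (fun t => S.proc t = j),
              ENNReal.ofReal (p t))
            + ∑ j : Fin m, ∑ k ∈ L.toFinset,
              volume ((Set.Ico (0:ℝ) M \ B j) ∩ Set.Ico (S.start k) (S.start k + p k)) :=
          add_le_add
            (Finset.sum_le_sum fun j _ =>
              le_trans (measure_mono Set.inter_subset_right) (hBvol j))
            (Finset.sum_le_sum fun j _ => hidle j)
      _ ≤ ENNReal.ofReal P + ((m-1 : ℕ) : ℝ≥0∞) * ENNReal.ofReal C := by
          refine add_le_add (le_of_eq ?_) ?_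
          · rw [Finset.sum_fiberwise, hPdef,
              ENNReal.ofReal_sum_of_nonneg (fun t _ => (hp t).le)]
          · rw [Finset.sum_comm]
            refine le_trans (Finset.sum_le_sum hperk) ?_
            rw [Finset.sum_nsmul, hsumC, nsmul_eq_mul]
  have hmain : (m : ℝ) * M ≤ P + ((m : ℝ) - 1) * C := by
    have hcast : ((m - 1 : ℕ) : ℝ) = (m : ℝ) - 1 := by
      push_cast [Nat.cast_sub hm]; ring
    have h1 : ENNReal.ofReal ((m : ℝ) * M) ≤
        ENNReal.ofReal (P + ((m : ℝ) - 1) * C) := by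
      rw [ENNReal.ofReal_mul (by positivity), ENNReal.ofReal_add hP0
        (mul_nonneg (by linarith) hC0),
        ENNReal.ofReal_mul (by linarith),
        ENNReal.ofReal_natCast, ← hcast, ENNReal.ofReal_natCast]
      exact hEN
    rw [ENNReal.ofReal_le_ofReal_iff (by nlinarith)] at h1
    exact h1
  rw [hM]
  have hmR : (0:ℝ) < m := Nat.cast_pos.mpr hm
  have h2 : (2 - 1/(m:ℝ)) * OPT = ((2*m - 1) * OPT) / m := by field_simp
  rw [h2, le_div_iff₀ hmR]
  have h3 : ((m:ℝ) - 1) * C ≤ ((m:ℝ) - 1) * OPT :=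
    mul_le_mul_of_nonneg_left hCOPT (by linarith)
  nlinarith [hmain, hPle, h3]
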